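/- arXiv:1704.08754 — 2 statements merged into one kernel-verified Lean document; each statement's English description precedes it below -/
import Mathlib

section
/- Assume a_X > b_X > 0 and a_Y + b_Y > 0. Let x₁ = min{1/2, (b_Y − T_y·ln(a_X/b_X))/(a_Y + b_Y)}. Then L'(x) > 0 for every x ∈ (0, x₁). -/
open Real Filter Set Topology

/-- QRE response of the second player. -/
noncomputable def qreY (aY bY Ty : ℝ) (x : ℝ) : ℝ :=
  (1 + Real.exp ((bY - (aY + bY) * x) / Ty))⁻¹

/-- QRE temperature curve for the first player. -/
noncomputable def qreTX (aX bX aY bY Ty : ℝ) (x : ℝ) : ℝ :=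
  (bX - (aX + bX) * qreY aY bY Ty x) / Real.log (1 / x - 1)

/-- The auxiliary function L(x) = y(x) + x(1-x) ln(1/x-1) y'(x). -/
noncomputable def qreL (aY bY Ty : ℝ) (x : ℝ) : ℝ :=
  qreY aY bY Ty x + x * (1 - x) * Real.log (1 / x - 1) * deriv (qreY aY bY Ty) x

lemma exp_arg_hasDerivAt (aY bY Ty : ℝ) (x : ℝ) :
    HasDerivAt (fun x : ℝ => Real.exp ((bY - (aY + bY) * x) / Ty))
      (Real.exp ((bY - (aY + bY) * x) / Ty) * (-((aY + bY) / Ty))) x := by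
  have h1 : HasDerivAt (fun x : ℝ => (bY - (aY + bY) * x) / Ty) (-((aY + bY) / Ty)) x := by
    have : HasDerivAt (fun x : ℝ => bY - (aY + bY) * x) (-(aY + bY)) x := by
      simpa using (((hasDerivAt_id x).const_mul (aY + bY)).const_sub bY)
    have h2 := this.div_const Ty
    exact h2.congr_deriv (by ring)
  exact h1.exp

lemma one_add_exp_pos (t : ℝ) : (0:ℝ) < 1 + Real.exp t := by positivity

lemma qreY_hasDerivAt (aY bY Ty : ℝ) (x : ℝ) :
    HasDerivAt (qreY aY bY Ty)
      ((aY + bY) / Ty * Real.exp ((bY - (aY + bY) * x) / Ty) /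
        (1 + Real.exp ((bY - (aY + bY) * x) / Ty)) ^ 2) x := by
  have hne : (1 + Real.exp ((bY - (aY + bY) * x) / Ty)) ≠ 0 :=
    (one_add_exp_pos _).ne'
  have h := ((hasDerivAt_const x (1:ℝ)).add (exp_arg_hasDerivAt aY bY Ty x)).inv hne
  unfold qreY
  exact h.congr_deriv (by simp only [Pi.add_apply]; ring)

lemma deriv_qreY (aY bY Ty : ℝ) :
    deriv (qreY aY bY Ty) = fun x =>
      (aY + bY) / Ty * Real.exp ((bY - (aY + bY) * x) / Ty) /
        (1 + Real.exp ((bY - (aY + bY) * x) / Ty)) ^ 2 :=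
  funext fun x => (qreY_hasDerivAt aY bY Ty x).deriv

set_option maxHeartbeats 1000000 in
theorem stmt_7 (aX bX aY bY Ty : ℝ) (hTy : 0 < Ty)
    (hab : aX > bX) (hbX : bX > 0) (hY : aY + bY > 0) :
    ∀ x ∈ Set.Ioo (0:ℝ) (min (1/2 : ℝ) ((bY - Ty * Real.log (aX / bX)) / (aY + bY))),
      0 < deriv (qreL aY bY Ty) x := by
  rintro x ⟨hx0, hx1⟩
  have hx2 : x < 1/2 := lt_of_lt_of_le hx1 (min_le_left _ _)
  have hxb : x < (bY - Ty * Real.log (aX / bX)) / (aY + bY) :=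
    lt_of_lt_of_le hx1 (min_le_right _ _)
  set c := aY + bY with hc
  set E := Real.exp ((bY - c * x) / Ty) with hE
  -- E > 1
  have hlogab : 0 < Real.log (aX / bX) :=
    Real.log_pos (by rw [one_lt_div hbX]; exact hab)
  have hargpos : 0 < (bY - c * x) / Ty := by
    have : c * x < bY - Ty * Real.log (aX / bX) := by
      have := (lt_div_iff₀ hY).mp hxb; linarith [this]
    have : 0 < bY - c * x := by nlinarith [hlogab, hTy]
    positivity
  have hE1 : 1 < E := by
    rw [hE, show (1:ℝ) = Real.exp 0 by simp]
    exact Real.exp_lt_exp.mpr hargpos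
  have hEpos : (0:ℝ) < E := lt_trans one_pos hE1
  have hx1' : x < 1 := by linarith
  have hxne : x ≠ 0 := hx0.ne'
  have hfrac : 0 < 1 / x - 1 := by
    rw [sub_pos, lt_div_iff₀ hx0]; linarith
  have hfrac1 : 1 < 1 / x - 1 := by
    rw [lt_sub_iff_add_lt, lt_div_iff₀ hx0]; linarith
  have hlogpos : 0 < Real.log (1 / x - 1) := Real.log_pos hfrac1
  have h1Ene : (1 + E) ≠ 0 := by positivity
  have hTne : Ty ≠ 0 := hTy.ne'
  -- rewrite qreL
  have hLdef : qreL aY bY Ty = fun x =>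
      (1 + Real.exp ((bY - c * x) / Ty))⁻¹ +
      x * (1 - x) * Real.log (1 / x - 1) *
        (c / Ty * Real.exp ((bY - c * x) / Ty) /
          (1 + Real.exp ((bY - c * x) / Ty)) ^ 2) := by
    funext z
    rw [qreL, deriv_qreY, qreY]
  -- derivative pieces at x
  have hexp := exp_arg_hasDerivAt aY bY Ty x
  have hYx := qreY_hasDerivAt aY bY Ty x
  have hpoly : HasDerivAt (fun x : ℝ => x * (1 - x)) (1 - 2 * x) x := by
    have := (hasDerivAt_id x).mul ((hasDerivAt_const x (1:ℝ)).sub (hasDerivAt_id x))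
    exact this.congr_deriv (by simp only [Pi.sub_apply, id_eq]; ring)
  have hxx : (0:ℝ) < x * (1 - x) := by nlinarith
  have hlog : HasDerivAt (fun x : ℝ => Real.log (1 / x - 1))
      (-(x * (1 - x))⁻¹) x := by
    have hin : HasDerivAt (fun x : ℝ => 1 / x - 1) (-(x ^ 2)⁻¹ - 0) x := by
      simpa [one_div] using ((hasDerivAt_inv hxne).sub_const (1:ℝ))
    have h := hin.log hfrac.ne'
    convert h using 1
    rw [eq_div_iff hfrac.ne']
    have h1x : (1 - x) ≠ 0 := by linarith
    field_simp
    ring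
  have hsq : HasDerivAt (fun x : ℝ => (1 + Real.exp ((bY - c * x) / Ty)) ^ 2)
      (2 * (1 + E) ^ 1 * (0 + E * (-(c / Ty)))) x := by
    have := (hexp.const_add (1:ℝ)).fun_pow 2
    simpa using this
  have hD : HasDerivAt (fun x : ℝ => c / Ty * Real.exp ((bY - c * x) / Ty) /
      (1 + Real.exp ((bY - c * x) / Ty)) ^ 2)
      ((c / Ty * (E * (-(c / Ty))) * (1 + E) ^ 2 -
        c / Ty * E * (2 * (1 + E) ^ 1 * (0 + E * (-(c / Ty))))) / ((1 + E) ^ 2) ^ 2) x := by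
    exact (hexp.const_mul (c / Ty)).div hsq (by positivity)
  have hY' : HasDerivAt (fun x : ℝ => (1 + Real.exp ((bY - c * x) / Ty))⁻¹)
      (c / Ty * E / (1 + E) ^ 2) x := by
    exact hYx
  have htot := hY'.add (((hpoly.mul hlog).mul hD))
  have hLder : deriv (qreL aY bY Ty) x =
      c / Ty * E / (1 + E) ^ 2 +
      (((1 - 2 * x) * Real.log (1 / x - 1) +
          x * (1 - x) * -(x * (1 - x))⁻¹) *
          (c / Ty * E / (1 + E) ^ 2) +
        x * (1 - x) * Real.log (1 / x - 1) *
          ((c / Ty * (E * (-(c / Ty))) * (1 + E) ^ 2 -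
            c / Ty * E * (2 * (1 + E) ^ 1 * (0 + E * (-(c / Ty))))) / ((1 + E) ^ 2) ^ 2)) := by
    rw [hLdef]
    exact htot.deriv
  rw [hLder]
  set ℓ := Real.log (1 / x - 1) with hℓ
  clear_value c E ℓ
  have key : c / Ty * E / (1 + E) ^ 2 +
      ((((1 - 2 * x) * ℓ +
          x * (1 - x) * -(x * (1 - x))⁻¹) *
          (c / Ty * E / (1 + E) ^ 2) +
        x * (1 - x) * ℓ *
          ((c / Ty * (E * (-(c / Ty))) * (1 + E) ^ 2 -
            c / Ty * E * (2 * (1 + E) ^ 1 * (0 + E * (-(c / Ty))))) / ((1 + E) ^ 2) ^ 2)))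
      = ℓ * (c / Ty) * E / (1 + E) ^ 3 *
          ((1 - 2 * x) * (1 + E) + x * (1 - x) * (c / Ty) * (E - 1)) := by
    have hfne : (1 / x - 1) ≠ 0 := hfrac.ne'
    have h1x : (1 - x) ≠ 0 := by linarith
    field_simp
    ring
  rw [key]
  have hpos1 : 0 < ℓ * (c / Ty) * E / (1 + E) ^ 3 := by positivity
  have hpos2 : 0 < (1 - 2 * x) * (1 + E) + x * (1 - x) * (c / Ty) * (E - 1) := by
    have h1 : 0 < (1 - 2 * x) * (1 + E) := by nlinarith
    have h2 : 0 < x * (1 - x) * (c / Ty) * (E - 1) := by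
      have hcT : 0 < c / Ty := by positivity
      exact mul_pos (mul_pos hxx hcT) (by linarith)
    linarith
  exact mul_pos hpos1 hpos2
end

section
/- Assume a_X > b_X > 0, a_Y + b_Y > 0, b_Y > a_Y, and T_A < T_y < T_I, where T_A = max{0, −a_Y/ln(a_X/b_X)} and T_I = (b_Y − a_Y)/(2·ln(a_X/b_X)). Then there exists a unique x_L ∈ (1/2, 1) such that L(x_L) = b_X/(a_X + b_X); moreover T_X(x_L) > 0 and T_X(x) ≤ T_X(x_L) for every x ∈ (1/2, 1). -/
open Real Filter Set Topology

lemma aux_exp_ineq {t : ℝ} (ht0 : 0 ≤ t) : Real.exp (2*t) * (1-t) ≤ 1 + t := by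
  have key : ∀ u : ℝ, HasDerivAt (fun t => (1+t) - Real.exp (2*t) * (1-t))
      (1 - Real.exp (2*u) * (1-2*u)) u := by
    intro u
    have h1 : HasDerivAt (fun t : ℝ => 2*t) 2 u := by
      simpa using (hasDerivAt_id u).const_mul (2:ℝ)
    have h2 : HasDerivAt (fun t : ℝ => Real.exp (2*t)) (Real.exp (2*u) * 2) u :=
      (Real.hasDerivAt_exp _).comp u h1
    have h3 : HasDerivAt (fun t : ℝ => 1 - t) (-1) u := by
      simpa using (hasDerivAt_id u).const_sub (1:ℝ)
    have h5 : HasDerivAt (fun t : ℝ => 1 + t) 1 u := by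
      simpa using (hasDerivAt_id u).const_add (1:ℝ)
    have h4 := h5.sub (h2.mul h3)
    refine h4.congr_deriv (Eq.symm ?_)
    ring
  have mono : Monotone (fun t => (1+t) - Real.exp (2*t) * (1-t)) := by
    apply monotone_of_deriv_nonneg
    · intro u; exact (key u).differentiableAt
    · intro u
      rw [(key u).deriv]
      rcases le_or_gt (1-2*u) 0 with h | h
      · nlinarith [Real.exp_pos (2*u), mul_nonpos_of_nonneg_of_nonpos (Real.exp_pos (2*u)).le h]
      · have h6 : (1 - 2*u) ≤ Real.exp (-(2*u)) := by
          have := Real.add_one_le_exp (-(2*u)); linarith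
        have h7 : Real.exp (2*u) * (1-2*u) ≤ Real.exp (2*u) * Real.exp (-(2*u)) := by
          exact mul_le_mul_of_nonneg_left h6 (Real.exp_pos _).le
        rw [← Real.exp_add] at h7
        simp at h7
        linarith
  have h0 := mono ht0
  simp only [mul_zero, Real.exp_zero, one_mul, sub_zero, add_zero, mul_one] at h0
  linarith

lemma aux_log_ineq {t : ℝ} (ht0 : 0 ≤ t) (ht1 : t < 1) : 2*t ≤ Real.log ((1+t)/(1-t)) := by
  have h1t : (0:ℝ) < 1 - t := by linarith
  have hpos : (0:ℝ) < (1+t)/(1-t) := by positivity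
  rw [Real.le_log_iff_exp_le hpos, le_div_iff₀ h1t]
  exact aux_exp_ineq ht0

lemma two_mul_le_log {x : ℝ} (h1 : 1/2 < x) (h2 : x < 1) : 2*(2*x-1) ≤ Real.log (x/(1-x)) := by
  have h := aux_log_ineq (t := 2*x-1) (by linarith) (by linarith)
  have he : (1+(2*x-1))/(1-(2*x-1)) = x/(1-x) := by
    rw [div_eq_div_iff (by linarith) (by linarith)]; ring
  rwa [he] at h

lemma logit_diff_ge {c y : ℝ} (hc : 0 < c) (hcy : c ≤ y) (hy : y < 1) :
    2*(y-c)/(y+c-2*c*y) ≤ Real.log (y/(1-y)) - Real.log (c/(1-c)) := by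
  have hy0 : 0 < y := lt_of_lt_of_le hc hcy
  have h1y : 0 < 1 - y := by linarith
  have h1c : 0 < 1 - c := by linarith
  have hd : 0 < y + c - 2*c*y := by nlinarith
  have ht0 : 0 ≤ (y-c)/(y+c-2*c*y) := div_nonneg (by linarith) hd.le
  have ht1 : (y-c)/(y+c-2*c*y) < 1 := by
    rw [div_lt_one hd]; nlinarith
  have h := aux_log_ineq ht0 ht1
  have he : (1+(y-c)/(y+c-2*c*y))/(1-(y-c)/(y+c-2*c*y)) = (y/(1-y))/(c/(1-c)) := by
    rw [div_eq_div_iff]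
    · rw [one_add_div hd.ne', one_sub_div hd.ne']
      field_simp
      ring
    · have : 1-(y-c)/(y+c-2*c*y) = (2*c*(1-y))/(y+c-2*c*y) := by
        rw [one_sub_div hd.ne']; congr 1; ring
      rw [this]; positivity
    · positivity
  rw [he, Real.log_div (by positivity) (by positivity)] at h
  calc 2*(y-c)/(y+c-2*c*y) = 2*((y-c)/(y+c-2*c*y)) := by ring
  _ ≤ _ := h

lemma key_ineq {c y x s : ℝ} (hc : 0 < c) (hcy : c < y) (hy1 : y < 1)
    (hx : 1/2 < x) (hx1 : x < 1) (hs : 0 < s)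
    (hroot : y - c = s * (x*(1-x)) * Real.log (x/(1-x)) * (y*(1-y)))
    (hii : Real.log (y/(1-y)) - Real.log (c/(1-c)) < s * (x - 1/2)) :
    (y - c) * (1 - 2*y) < (2*x-1) * Real.log (x/(1-x)) * (y*(1-y)) := by
  set ℓ := Real.log (x/(1-x)) with hℓdef
  have hx0 : 0 < x := by linarith
  have h1x : 0 < 1 - x := by linarith
  have hy0 : 0 < y := lt_trans hc hcy
  have h1y : 0 < 1 - y := by linarith
  have hP : 0 < y*(1-y) := by positivity
  have hε : 0 < y - c := by linarith
  have hℓ : 0 < ℓ := Real.log_pos (by rw [lt_div_iff₀ h1x]; linarith)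
  have hℓ4 : x - 1/2 ≤ ℓ/4 := by have := two_mul_le_log hx hx1; linarith
  rcases le_or_gt (1/2 : ℝ) y with hy2 | hy2
  · -- trivial case y ≥ 1/2
    have hL : (y-c)*(1-2*y) ≤ 0 := mul_nonpos_of_nonneg_of_nonpos hε.le (by linarith)
    have hR : 0 < (2*x-1) * ℓ * (y*(1-y)) := by
      apply mul_pos (mul_pos (by linarith) hℓ) hP
    linarith
  · -- main case y < 1/2
    set Δ := Real.log (y/(1-y)) - Real.log (c/(1-c)) with hΔdef
    have hd : 0 < y + c - 2*c*y := by nlinarith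
    have h2 : 2*(y-c)/(y+c-2*c*y) ≤ Δ := logit_diff_ge hc hcy.le hy1
    have h3 : 2*(y-c) ≤ Δ * (y+c-2*c*y) := by
      rw [div_le_iff₀ hd] at h2; linarith
    have hΔ : 0 < Δ := by nlinarith
    -- step 4: x(1-x) ℓ P Δ < (y-c) * (x - 1/2)
    have h4 : (x*(1-x)) * ℓ * (y*(1-y)) * Δ < (y-c) * (x-1/2) := by
      have hm : 0 < (x*(1-x)) * ℓ * (y*(1-y)) := by positivity
      calc (x*(1-x)) * ℓ * (y*(1-y)) * Δ < (x*(1-x)) * ℓ * (y*(1-y)) * (s*(x-1/2)) :=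
            by exact mul_lt_mul_of_pos_left hii hm
        _ = (s * (x*(1-x)) * ℓ * (y*(1-y))) * (x-1/2) := by ring
        _ = (y-c) * (x-1/2) := by rw [← hroot]
    -- step 5: 4 x(1-x) P Δ < y - c
    have h5 : 4 * ((x*(1-x)) * (y*(1-y)) * Δ) < y - c := by
      have h4' : (x*(1-x)) * ℓ * (y*(1-y)) * Δ < (y-c) * (ℓ/4) := by
        calc (x*(1-x)) * ℓ * (y*(1-y)) * Δ < (y-c)*(x-1/2) := h4
          _ ≤ (y-c)*(ℓ/4) := by
              exact mul_le_mul_of_nonneg_left hℓ4 hε.le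
      have hmul : 4 * ((x*(1-x)) * (y*(1-y)) * Δ) * ℓ < (y-c) * ℓ := by
        calc 4 * ((x*(1-x)) * (y*(1-y)) * Δ) * ℓ = 4 * ((x*(1-x)) * ℓ * (y*(1-y)) * Δ) := by ring
          _ < 4 * ((y-c)*(ℓ/4)) := by linarith
          _ = (y-c) * ℓ := by ring
      exact lt_of_mul_lt_mul_right hmul hℓ.le
    -- identity: y+c-2cy = 2 y(1-y) - (y-c)(1-2y)
    have hid : y + c - 2*c*y = 2*(y*(1-y)) - (y-c)*(1-2*y) := by ring
    -- combine: 2(1-4x(1-x)) P Δ > (y-c) Δ (1-2y)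
    have h6 : (y-c) * Δ * (1-2*y) < 2*(1 - 4*(x*(1-x))) * (y*(1-y)) * Δ := by nlinarith
    have h7 : (y-c) * (1-2*y) < 2*(1 - 4*(x*(1-x))) * (y*(1-y)) := by
      have hmul : (y-c)*(1-2*y)*Δ < 2*(1 - 4*(x*(1-x))) * (y*(1-y)) * Δ := by
        calc (y-c)*(1-2*y)*Δ = (y-c)*Δ*(1-2*y) := by ring
          _ < 2*(1 - 4*(x*(1-x))) * (y*(1-y)) * Δ := h6
      exact lt_of_mul_lt_mul_right hmul hΔ.le
    -- finish: (2x-1) ℓ ≥ 2 (2x-1)^2 = 2(1-4x(1-x))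
    have h8 : 2*(1 - 4*(x*(1-x))) * (y*(1-y)) ≤ (2*x-1) * ℓ * (y*(1-y)) := by
      have h9 : 2*(1 - 4*(x*(1-x))) ≤ (2*x-1) * ℓ := by
        have h10 : 2*(2*x-1) ≤ ℓ := by have := two_mul_le_log hx hx1; linarith
        have h11 : (2*x-1) * (2*(2*x-1)) ≤ (2*x-1) * ℓ :=
          mul_le_mul_of_nonneg_left h10 (by linarith)
        nlinarith
      exact mul_le_mul_of_nonneg_right h9 hP.le
    linarith

section deriv
variable {aY bY Ty : ℝ}

lemma qreY_pos (aY bY Ty x : ℝ) : 0 < qreY aY bY Ty x := by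
  rw [qreY]; positivity

lemma qreY_lt_one (aY bY Ty x : ℝ) : qreY aY bY Ty x < 1 := by
  rw [qreY]
  rw [inv_lt_one_iff₀]
  right
  nlinarith [Real.exp_pos ((bY - (aY + bY) * x) / Ty)]

lemma one_add_exp_ne (t : ℝ) : 1 + Real.exp t ≠ 0 := by positivity

lemma hasDerivAt_qreY (x : ℝ) :
    HasDerivAt (qreY aY bY Ty) ((aY+bY)/Ty * (qreY aY bY Ty x * (1 - qreY aY bY Ty x))) x := by
  have hg : HasDerivAt (fun x : ℝ => (bY - (aY + bY) * x) / Ty) (-(aY+bY)/Ty) x := by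
    have h1 : HasDerivAt (fun x : ℝ => (aY + bY) * x) (aY+bY) x := by
      simpa using (hasDerivAt_id x).const_mul (aY+bY)
    simpa using (h1.const_sub bY).div_const Ty
  have hE : HasDerivAt (fun x : ℝ => Real.exp ((bY - (aY + bY) * x) / Ty))
      (Real.exp ((bY - (aY + bY) * x) / Ty) * (-(aY+bY)/Ty)) x :=
    (Real.hasDerivAt_exp _).comp x hg
  have hden : HasDerivAt (fun x : ℝ => 1 + Real.exp ((bY - (aY + bY) * x) / Ty))
      (Real.exp ((bY - (aY + bY) * x) / Ty) * (-(aY+bY)/Ty)) x := hE.const_add 1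
  have hinv := hden.inv (one_add_exp_ne _)
  have heq : -(Real.exp ((bY - (aY + bY) * x) / Ty) * (-(aY+bY)/Ty)) /
      (1 + Real.exp ((bY - (aY + bY) * x) / Ty))^2
      = (aY+bY)/Ty * (qreY aY bY Ty x * (1 - qreY aY bY Ty x)) := by
    rw [qreY]
    have h0 := one_add_exp_ne ((bY - (aY + bY) * x) / Ty)
    field_simp
    ring
  rw [heq] at hinv
  exact hinv

lemma deriv_qreY_eq :
    deriv (qreY aY bY Ty) = fun x => (aY+bY)/Ty * (qreY aY bY Ty x * (1 - qreY aY bY Ty x)) :=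
  funext fun x => (hasDerivAt_qreY x).deriv

lemma qreL_eq (x : ℝ) :
    qreL aY bY Ty x = qreY aY bY Ty x + x * (1 - x) * Real.log (1 / x - 1) *
      ((aY+bY)/Ty * (qreY aY bY Ty x * (1 - qreY aY bY Ty x))) := by
  rw [qreL, deriv_qreY_eq]

lemma log_term_eq {x : ℝ} (hx0 : 0 < x) (hx1 : x < 1) :
    Real.log (1 / x - 1) = -Real.log (x / (1-x)) := by
  have h1 : 1 / x - 1 = (x / (1-x))⁻¹ := by
    field_simp
  rw [h1, Real.log_inv]

lemma hasDerivAt_logterm {x : ℝ} (hx0 : 0 < x) (hx1 : x < 1) :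
    HasDerivAt (fun x : ℝ => Real.log (1 / x - 1)) (-(1/(x*(1-x)))) x := by
  have hne : x ≠ 0 := ne_of_gt hx0
  have hpos : 0 < 1 / x - 1 := by
    rw [lt_sub_iff_add_lt, zero_add, lt_div_iff₀ hx0]; linarith
  have h1 : HasDerivAt (fun x : ℝ => 1 / x - 1) (-(x^2)⁻¹) x := by
    simpa [one_div] using (hasDerivAt_inv hne).sub_const 1
  have h2 := (Real.hasDerivAt_log (ne_of_gt hpos)).comp x h1
  refine h2.congr_deriv (Eq.symm ?_)
  have h1x : (1:ℝ) - x ≠ 0 := by linarith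
  rw [show (1:ℝ)/x - 1 = (1-x)/x by field_simp, inv_div]
  rw [div_mul_eq_mul_div, eq_div_iff h1x]
  field_simp
end deriv

section deriv2
variable {aY bY Ty aX bX : ℝ}

lemma hasDerivAt_qreL {x : ℝ} (hx0 : 0 < x) (hx1 : x < 1) :
    HasDerivAt (qreL aY bY Ty)
      ((aY+bY)/Ty * (qreY aY bY Ty x * (1 - qreY aY bY Ty x)) * ((1-2*x) * Real.log (1/x-1))
        + (x*(1-x)*Real.log (1/x-1)) *
          (((aY+bY)/Ty)^2 * (qreY aY bY Ty x * (1 - qreY aY bY Ty x)) * (1-2*qreY aY bY Ty x))) x := by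
  have hfun : qreL aY bY Ty = fun x => qreY aY bY Ty x + (x * (1 - x) * Real.log (1 / x - 1)) *
      ((aY+bY)/Ty * (qreY aY bY Ty x * (1 - qreY aY bY Ty x))) := funext fun x => qreL_eq x
  rw [hfun]
  have hY := hasDerivAt_qreY (aY := aY) (bY := bY) (Ty := Ty) x
  have hu : HasDerivAt (fun x : ℝ => x * (1-x)) (1-2*x) x := by
    have := (hasDerivAt_id x).mul ((hasDerivAt_id x).const_sub 1)
    refine this.congr_deriv (Eq.symm ?_); simp [id]; ring
  have hG := hasDerivAt_logterm hx0 hx1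
  have hv := hu.mul hG
  have hW : HasDerivAt (fun x => (aY+bY)/Ty * (qreY aY bY Ty x * (1 - qreY aY bY Ty x)))
      ((aY+bY)/Ty * (((aY+bY)/Ty * (qreY aY bY Ty x * (1 - qreY aY bY Ty x))) * (1 - qreY aY bY Ty x)
        + qreY aY bY Ty x * (-((aY+bY)/Ty * (qreY aY bY Ty x * (1 - qreY aY bY Ty x)))))) x :=
    ((hY.mul (hY.const_sub 1)).const_mul _)
  have htot := hY.add (hv.mul hW)
  refine htot.congr_deriv (Eq.symm ?_)
  have hxne : x ≠ 0 := ne_of_gt hx0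
  have h1xne : (1:ℝ) - x ≠ 0 := by linarith
  simp only [Pi.mul_apply]
  field_simp
  ring

lemma hasDerivAt_qreTX {x : ℝ} (hx0 : 1/2 < x) (hx1 : x < 1)
    (hG : Real.log (1/x - 1) ≠ 0) :
    HasDerivAt (qreTX aX bX aY bY Ty)
      ((bX - (aX + bX) * qreL aY bY Ty x) / ((x*(1-x)) * (Real.log (1/x-1))^2)) x := by
  have hx0' : 0 < x := by linarith
  have hxne : x ≠ 0 := ne_of_gt hx0'
  have h1xne : (1:ℝ) - x ≠ 0 := by intro h; exact absurd h (by intro hh; linarith)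
  have hY := hasDerivAt_qreY (aY := aY) (bY := bY) (Ty := Ty) x
  have hF : HasDerivAt (fun x => bX - (aX + bX) * qreY aY bY Ty x)
      (-((aX+bX) * ((aY+bY)/Ty * (qreY aY bY Ty x * (1 - qreY aY bY Ty x))))) x := by
    simpa using ((hY.const_mul (aX+bX)).const_sub bX)
  have hGd := hasDerivAt_logterm hx0' hx1
  have hdiv := hF.div hGd hG
  have hfun : qreTX aX bX aY bY Ty = fun x =>
      (bX - (aX + bX) * qreY aY bY Ty x) / Real.log (1 / x - 1) := rfl
  rw [hfun]
  refine hdiv.congr_deriv (Eq.symm ?_)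
  rw [qreL_eq]
  field_simp
  ring
end deriv2

/-- If f has positive derivative at z then f is eventually greater on the right. -/
lemma eventually_gt_right {f : ℝ → ℝ} {z d : ℝ} (hf : HasDerivAt f d z) (hd : 0 < d) :
    ∀ᶠ w in 𝓝[>] z, f z < f w := by
  have h1 : Tendsto (slope f z) (𝓝[≠] z) (𝓝 d) := hasDerivAt_iff_tendsto_slope.1 hf
  have h2 : ∀ᶠ w in 𝓝[≠] z, 0 < slope f z w := h1.eventually (eventually_gt_nhds hd)
  have h3 : ∀ᶠ w in 𝓝[>] z, 0 < slope f z w :=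
    h2.filter_mono (nhdsWithin_mono z fun w hw => ne_of_gt hw)
  have h4 : ∀ᶠ w in 𝓝[>] z, z < w := eventually_mem_nhdsWithin
  filter_upwards [h3, h4] with w hs hz
  rw [slope_def_field] at hs
  have h5 : 0 < f w - f z := by
    have h6 := mul_pos hs (sub_pos.2 hz)
    rwa [div_mul_cancel₀ _ (ne_of_gt (sub_pos.2 hz))] at h6
  linarith

lemma eventually_lt_left {f : ℝ → ℝ} {z d : ℝ} (hf : HasDerivAt f d z) (hd : 0 < d) :
    ∀ᶠ w in 𝓝[<] z, f w < f z := by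
  have h1 : Tendsto (slope f z) (𝓝[≠] z) (𝓝 d) := hasDerivAt_iff_tendsto_slope.1 hf
  have h2 : ∀ᶠ w in 𝓝[≠] z, 0 < slope f z w := h1.eventually (eventually_gt_nhds hd)
  have h3 : ∀ᶠ w in 𝓝[<] z, 0 < slope f z w :=
    h2.filter_mono (nhdsWithin_mono z fun w hw => ne_of_lt hw)
  have h4 : ∀ᶠ w in 𝓝[<] z, w < z := eventually_mem_nhdsWithin
  filter_upwards [h3, h4] with w hs hz
  rw [slope_def_field] at hs
  rcases div_pos_iff.mp hs with ⟨h5, h6⟩ | ⟨h5, h6⟩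
  · linarith
  · linarith

/-- At most one root of f = 0 on an open interval if f is differentiable there and has
positive derivative at every root. -/
lemma uniq_root {f : ℝ → ℝ} {a b : ℝ}
    (hd : ∀ z ∈ Ioo a b, ∃ d, HasDerivAt f d z)
    (hpos : ∀ z ∈ Ioo a b, f z = 0 → ∃ d, 0 < d ∧ HasDerivAt f d z) :
    ∀ x₁ ∈ Ioo a b, ∀ x₂ ∈ Ioo a b, f x₁ = 0 → f x₂ = 0 → x₁ = x₂ := by
  have hcont : ∀ s : Set ℝ, s ⊆ Ioo a b → ContinuousOn f s := by
    intro s hs z hz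
    obtain ⟨d, hd'⟩ := hd z (hs hz)
    exact hd'.continuousAt.continuousWithinAt
  -- main asymmetric argument
  have main : ∀ p ∈ Ioo a b, ∀ q ∈ Ioo a b, f p = 0 → f q = 0 → p < q → False := by
    intro p hp q hq hfp hfq hpq
    -- f < 0 just left of q
    obtain ⟨dq, hdq0, hdq⟩ := hpos q hq hfq
    have hev := eventually_lt_left hdq hdq0
    rw [hfq] at hev
    obtain ⟨s, hs_mem, hs_sub⟩ := hev.exists_mem
    rw [mem_nhdsLT_iff_exists_Ioo_subset] at hs_mem
    obtain ⟨l, hl, hls⟩ := hs_mem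
    set m := max l p with hm
    have hmq : m < q := max_lt hl hpq
    have hneg : ∀ w, m < w → w < q → f w < 0 := by
      intro w h1 h2
      exact hs_sub w (hls ⟨lt_of_le_of_lt (le_max_left l p) h1, h2⟩)
    -- the greatest root in [p, m]
    set K := Icc p m ∩ f ⁻¹' {0} with hK
    have hKsub : Icc p m ⊆ Ioo a b := fun w hw =>
      ⟨lt_of_lt_of_le hp.1 hw.1, lt_of_le_of_lt hw.2 (lt_of_lt_of_le hmq hq.2.le)⟩
    have hKclosed : IsClosed K :=
      (hcont _ hKsub).preimage_isClosed_of_isClosed isClosed_Icc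
        (isClosed_singleton (x := (0:ℝ)))
    have hKcpt : IsCompact K :=
      isCompact_Icc.of_isClosed_subset hKclosed (fun w hw => hw.1)
    have hKne : K.Nonempty := ⟨p, ⟨le_refl p, le_max_right l p⟩, by simp [hfp]⟩
    obtain ⟨z, hzK, hzmax⟩ := hKcpt.exists_isGreatest hKne
    have hz_ab : z ∈ Ioo a b := hKsub hzK.1
    have hfz : f z = 0 := by simpa using hzK.2
    -- f > 0 just right of z
    obtain ⟨dz, hdz0, hdz⟩ := hpos z hz_ab hfz
    have hev2 := eventually_gt_right hdz hdz0
    rw [hfz] at hev2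
    have hzq : z < q := lt_of_le_of_lt hzK.1.2 hmq
    have hmem : Ioo z q ∈ 𝓝[>] z := Ioo_mem_nhdsGT_of_mem ⟨le_refl z, hzq⟩
    have hev3 : ∀ᶠ w in 𝓝[>] z, w ∈ Ioo z q := eventually_of_mem hmem (fun x hx => hx)
    obtain ⟨w₁, hw₁pos, hw₁mem⟩ := (hev2.and hev3).exists
    -- choose w₂
    set w₂ := (max m w₁ + q)/2 with hw₂
    have hmw₁ : max m w₁ < q := max_lt hmq hw₁mem.2
    have hw₂1 : w₁ < w₂ := by
      have : max m w₁ < w₂ := by rw [hw₂]; linarith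
      exact lt_of_le_of_lt (le_max_right m w₁) this
    have hw₂m : m < w₂ := by
      have : max m w₁ < w₂ := by rw [hw₂]; linarith
      exact lt_of_le_of_lt (le_max_left m w₁) this
    have hw₂q : w₂ < q := by rw [hw₂]; linarith
    have hw₂neg : f w₂ < 0 := hneg w₂ hw₂m hw₂q
    -- IVT on [w₁, w₂]
    have hsub2 : Icc w₁ w₂ ⊆ Ioo a b := fun w hw =>
      ⟨lt_trans hz_ab.1 (lt_of_lt_of_le hw₁mem.1 hw.1),
       lt_of_le_of_lt hw.2 (lt_trans hw₂q hq.2)⟩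
    have hivt := intermediate_value_Icc' hw₂1.le (hcont _ hsub2)
    have h0mem : (0:ℝ) ∈ Icc (f w₂) (f w₁) := ⟨hw₂neg.le, hw₁pos.le⟩
    obtain ⟨r, hr_mem, hr_eq⟩ := hivt h0mem
    -- r is a root with z < r
    have hzr : z < r := lt_of_lt_of_le hw₁mem.1 hr_mem.1
    rcases le_or_gt r m with hrm | hrm
    · -- r ∈ K, contradicts maximality
      have : r ∈ K := ⟨⟨le_trans hzK.1.1 (le_of_lt hzr), hrm⟩, by simp [hr_eq.symm]⟩
      exact absurd (hzmax this) (not_le.2 hzr)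
    · -- r ∈ (m, q), where f < 0
      have : f r < 0 := hneg r hrm (lt_of_le_of_lt hr_mem.2 hw₂q)
      rw [hr_eq] at this; exact lt_irrefl 0 this
  intro x₁ h₁ x₂ h₂ hf₁ hf₂
  rcases lt_trichotomy x₁ x₂ with h | h | h
  · exact absurd (main x₁ h₁ x₂ h₂ hf₁ hf₂ h) (fun hF => hF)
  · exact h
  · exact absurd (main x₂ h₂ x₁ h₁ hf₂ hf₁ h) (fun hF => hF)

lemma qreY_continuous (aY bY Ty : ℝ) : Continuous (qreY aY bY Ty) := by
  have h1 : Continuous fun x : ℝ => 1 + Real.exp ((bY - (aY+bY)*x)/Ty) := by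
    apply continuous_const.add
    exact Real.continuous_exp.comp (by continuity)
  exact h1.inv₀ (fun x => by positivity)

lemma tendsto_qreL_one (aY bY Ty : ℝ) :
    Tendsto (qreL aY bY Ty) (𝓝[<] (1:ℝ)) (𝓝 (qreY aY bY Ty 1)) := by
  have hYcont := qreY_continuous aY bY Ty
  have c1 : Continuous fun w : ℝ => w * ((1-w)*Real.log (1-w)) :=
    continuous_id.mul (Real.continuous_mul_log.comp (continuous_const.sub continuous_id))
  have c2 : ContinuousAt (fun w : ℝ => (w*(1-w)) * Real.log w) 1 :=
    ((continuous_id.mul (continuous_const.sub continuous_id)).continuousAt).mul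
      (Real.continuousAt_log one_ne_zero)
  have c3 : Continuous fun w => (aY+bY)/Ty*(qreY aY bY Ty w*(1-qreY aY bY Ty w)) :=
    continuous_const.mul (hYcont.mul (continuous_const.sub hYcont))
  have hphi1 : ContinuousAt (fun w : ℝ => qreY aY bY Ty w +
      (w*((1-w)*Real.log (1-w)) - (w*(1-w))*Real.log w) *
        ((aY+bY)/Ty*(qreY aY bY Ty w*(1-qreY aY bY Ty w)))) 1 :=
    (hYcont.continuousAt).add ((c1.continuousAt.sub c2).mul c3.continuousAt)
  have h5 := hphi1.tendsto.mono_left (nhdsWithin_le_nhds (s := Iio (1:ℝ)))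
  have hval : qreY aY bY Ty 1 +
      (1*((1-1)*Real.log (1-1)) - (1*(1-1))*Real.log 1) *
        ((aY+bY)/Ty*(qreY aY bY Ty 1*(1-qreY aY bY Ty 1))) = qreY aY bY Ty 1 := by
    norm_num
  rw [hval] at h5
  apply h5.congr'
  filter_upwards [Ioo_mem_nhdsLT_of_mem
    (⟨(by norm_num : (0:ℝ) < 1), le_refl (1:ℝ)⟩ : (1:ℝ) ∈ Ioc (0:ℝ) 1)] with w hw
  have hw0 : (0:ℝ) < w := hw.1
  have hw1 : w < 1 := hw.2
  rw [qreL_eq]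
  rw [show Real.log (1/w - 1) = Real.log (1-w) - Real.log w by
    rw [div_sub_one (ne_of_gt hw0)]
    exact Real.log_div (ne_of_gt (by linarith : (0:ℝ) < 1-w)) (ne_of_gt hw0)]
  ring

set_option maxHeartbeats 2000000 in
theorem stmt_13 (aX bX aY bY Ty : ℝ) (hTy : 0 < Ty)
    (hab : aX > bX) (hbX : bX > 0) (hY : aY + bY > 0) (hba : bY > aY)
    (hlo : max 0 (-aY / Real.log (aX / bX)) < Ty)
    (hhi : Ty < (bY - aY) / (2 * Real.log (aX / bX))) :
    ∃ xL ∈ Set.Ioo (1/2 : ℝ) 1,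
      qreL aY bY Ty xL = bX / (aX + bX) ∧
      (∀ x ∈ Set.Ioo (1/2 : ℝ) 1, qreL aY bY Ty x = bX / (aX + bX) → x = xL) ∧
      0 < qreTX aX bX aY bY Ty xL ∧
      ∀ x ∈ Set.Ioo (1/2 : ℝ) 1, qreTX aX bX aY bY Ty x ≤ qreTX aX bX aY bY Ty xL := by
  rw [show (1:ℝ)/2 = 1/2 by norm_num]
  obtain ⟨c, hc_def⟩ : ∃ c : ℝ, c = bX / (aX + bX) := ⟨_, rfl⟩
  rw [← hc_def]
  obtain ⟨k, hk_def⟩ : ∃ k : ℝ, k = (aY + bY) / Ty := ⟨_, rfl⟩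
  have hk : 0 < k := by rw [hk_def]; exact div_pos hY hTy
  have haXbX : 0 < aX + bX := by linarith
  have hc0 : 0 < c := by rw [hc_def]; exact div_pos hbX haXbX
  have hc2 : c < 1/2 := by rw [hc_def, div_lt_iff₀ haXbX]; linarith
  have hgt1 : (1:ℝ) < aX / bX := (one_lt_div hbX).2 hab
  have habpos : (0:ℝ) < aX / bX := by positivity
  have hlog : 0 < Real.log (aX / bX) := Real.log_pos hgt1
  have hlog2 : Ty * (2 * Real.log (aX / bX)) < bY - aY := by
    rw [lt_div_iff₀ (by positivity)] at hhi; linarith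
  -- Y(1) > c
  have hY1c : c < qreY aY bY Ty 1 := by
    have h1 : -aY / Real.log (aX/bX) < Ty := lt_of_le_of_lt (le_max_right _ _) hlo
    have h2 : -aY < Ty * Real.log (aX/bX) := by rw [div_lt_iff₀ hlog] at h1; linarith
    have hexp : Real.exp ((bY - (aY+bY)*1)/Ty) < aX/bX := by
      rw [← Real.exp_log habpos]
      apply Real.exp_lt_exp.2
      rw [div_lt_iff₀ hTy]; nlinarith
    rw [qreY]
    have hE := Real.exp_pos ((bY - (aY+bY)*1)/Ty)
    rw [hc_def, div_lt_iff₀ haXbX]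
    rw [inv_mul_eq_div, lt_div_iff₀ (by positivity)]
    have h3 : Real.exp ((bY - (aY+bY)*1)/Ty) * bX < aX := (lt_div_iff₀ hbX).1 hexp
    nlinarith
  -- Y(1/2) < c
  have hYhalfc : qreY aY bY Ty (1/2) < c := by
    have hexp : aX/bX < Real.exp ((bY - (aY+bY)*(1/2))/Ty) := by
      rw [← Real.exp_log habpos]
      apply Real.exp_lt_exp.2
      rw [lt_div_iff₀ hTy]; nlinarith
    rw [qreY]
    have hE := Real.exp_pos ((bY - (aY+bY)*(1/2))/Ty)
    rw [hc_def]
    rw [inv_eq_one_div, div_lt_div_iff₀ (by positivity) haXbX]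
    have h3 : aX < Real.exp ((bY - (aY+bY)*(1/2))/Ty) * bX := by
      rw [div_lt_iff₀ hbX] at hexp; linarith
    nlinarith
  -- logit computations
  have hlogitY : ∀ x : ℝ, Real.log (qreY aY bY Ty x / (1 - qreY aY bY Ty x))
      = ((aY+bY)*x - bY)/Ty := by
    intro x
    have hE := Real.exp_pos ((bY - (aY + bY) * x) / Ty)
    have h1 : qreY aY bY Ty x / (1 - qreY aY bY Ty x)
        = Real.exp (((aY+bY)*x - bY)/Ty) := by
      rw [qreY, show ((aY+bY)*x - bY)/Ty = -((bY - (aY+bY)*x)/Ty) by ring, Real.exp_neg]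
      have hne : (1:ℝ) + Real.exp ((bY-(aY+bY)*x)/Ty) ≠ 0 := by positivity
      have h2 : 1 - (1 + Real.exp ((bY-(aY+bY)*x)/Ty))⁻¹
          = Real.exp ((bY-(aY+bY)*x)/Ty) / (1 + Real.exp ((bY-(aY+bY)*x)/Ty)) := by
        field_simp
        ring
      rw [h2, div_div_eq_mul_div, inv_mul_cancel₀ hne, one_div]
    rw [h1, Real.log_exp]
  have hlogitc : Real.log (c / (1-c)) = -Real.log (aX/bX) := by
    have h1 : c / (1-c) = bX / aX := by
      rw [hc_def]
      rw [show 1 - bX/(aX+bX) = aX/(aX+bX) by field_simp; ring]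
      rw [div_div_div_cancel_right₀]
      exact ne_of_gt haXbX
    rw [h1, ← Real.log_inv, inv_div]
  -- facts about log(1/z-1) on (1/2,1)
  have hGneg : ∀ z ∈ Ioo (1/2:ℝ) 1, Real.log (1/z - 1) < 0 := by
    intro z hz
    have hz0 : (0:ℝ) < z := by have := hz.1; linarith
    apply Real.log_neg
    · rw [lt_sub_iff_add_lt, zero_add, lt_div_iff₀ hz0, one_mul]; exact hz.2
    · rw [sub_lt_iff_lt_add, div_lt_iff₀ hz0]; have := hz.1; linarith
  -- positive derivative of qreL at roots
  have hDpos : ∀ z ∈ Ioo (1/2:ℝ) 1, qreL aY bY Ty z = c →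
      ∃ d, 0 < d ∧ HasDerivAt (qreL aY bY Ty) d z := by
    intro z hz hroot
    have hzh : (1/2:ℝ) < z := hz.1
    have hz1 : z < 1 := hz.2
    have hz0 : (0:ℝ) < z := by linarith
    set Yz := qreY aY bY Ty z with hYz_def
    have hYz0 : 0 < Yz := qreY_pos aY bY Ty z
    have hYz1 : Yz < 1 := qreY_lt_one aY bY Ty z
    set l := Real.log (z/(1-z)) with hl_def
    have hGz : Real.log (1/z - 1) = -l := log_term_eq hz0 hz1
    have hlpos : 0 < l := Real.log_pos (by rw [lt_div_iff₀ (by linarith)]; linarith)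
    have hre : Yz - c = k * (z*(1-z)) * l * (Yz*(1-Yz)) := by
      rw [qreL_eq, hGz, ← hk_def] at hroot
      linear_combination hroot
    have hz1x : 0 < z*(1-z) := mul_pos hz0 (by linarith)
    have hYzP : 0 < Yz*(1-Yz) := mul_pos hYz0 (by linarith)
    have hcy : c < Yz := by
      have h4 : 0 < k * (z*(1-z)) * l * (Yz*(1-Yz)) :=
        mul_pos (mul_pos (mul_pos hk hz1x) hlpos) hYzP
      linarith
    have hii : Real.log (Yz/(1-Yz)) - Real.log (c/(1-c)) < k * (z - 1/2) := by
      rw [hYz_def, hlogitY z, hlogitc]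
      have e1 : k*(z-1/2) - (((aY+bY)*z - bY)/Ty - -Real.log (aX/bX))
          = ((bY - aY) - Ty * (2 * Real.log (aX/bX)))/(2*Ty) := by
        rw [hk_def]; field_simp; ring
      have e2 : 0 < ((bY - aY) - Ty * (2 * Real.log (aX/bX)))/(2*Ty) :=
        div_pos (by linarith) (by linarith)
      linarith
    have kc := key_ineq hc0 hcy hYz1 hzh hz1 hk hre hii
    refine ⟨_, ?_, hasDerivAt_qreL hz0 hz1⟩
    rw [← hk_def]
    have hDeq : k * (Yz * (1 - Yz)) * ((1-2*z) * Real.log (1/z-1))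
        + (z*(1-z)*Real.log (1/z-1)) * (k^2 * (Yz*(1-Yz)) * (1-2*Yz))
        = k * ((2*z-1)*l*(Yz*(1-Yz)) - (Yz - c)*(1-2*Yz)) := by
      rw [hGz]
      linear_combination (k*(1-2*Yz)) * hre
    rw [hDeq]
    exact mul_pos hk (by linarith)
  have hYcont := qreY_continuous aY bY Ty
  have hEvY : ∀ᶠ w in 𝓝[<] (1:ℝ), c < qreY aY bY Ty w :=
    ((hYcont.tendsto 1).mono_left nhdsWithin_le_nhds).eventually (eventually_gt_nhds hY1c)
  have hEv : ∀ᶠ w in 𝓝[<] (1:ℝ), c < qreL aY bY Ty w :=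
    (tendsto_qreL_one aY bY Ty).eventually (eventually_gt_nhds hY1c)
  -- value at 1/2
  have hLhalf : qreL aY bY Ty (1/2) = qreY aY bY Ty (1/2) := by
    rw [qreL_eq]
    norm_num
  -- continuity of qreL on subsets of (0,1)
  have hLcont : ∀ s : Set ℝ, s ⊆ Ioo (0:ℝ) 1 → ContinuousOn (qreL aY bY Ty) s := by
    intro s hs w hw
    exact (hasDerivAt_qreL (hs hw).1 (hs hw).2).continuousAt.continuousWithinAt
  -- existence of a root
  obtain ⟨x₂, hx₂L, hx₂mem⟩ := (hEv.and (eventually_of_mem (Ioo_mem_nhdsLT_of_mem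
    (⟨(by norm_num : (1/2:ℝ) < 1), le_refl (1:ℝ)⟩ : (1:ℝ) ∈ Ioc (1/2:ℝ) 1))
    (fun x hx => hx))).exists
  have hx₂h : (1/2:ℝ) < x₂ := hx₂mem.1
  have hx₂1 : x₂ < 1 := hx₂mem.2
  have hsub1 : Icc (1/2:ℝ) x₂ ⊆ Ioo (0:ℝ) 1 := fun w hw =>
    ⟨by have := hw.1; linarith, lt_of_le_of_lt hw.2 hx₂1⟩
  have hivt := intermediate_value_Icc (le_of_lt hx₂h) (hLcont _ hsub1)
  obtain ⟨xL, hxLmem, hxL⟩ := hivt ⟨by rw [hLhalf]; exact hYhalfc.le, hx₂L.le⟩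
  have hxLh : (1/2:ℝ) < xL := by
    rcases eq_or_lt_of_le hxLmem.1 with h | h
    · rw [← h, hLhalf] at hxL
      exact absurd hxL (ne_of_lt hYhalfc)
    · exact h
  have hxL1 : xL < 1 := lt_of_le_of_lt hxLmem.2 hx₂1
  have hxLIoo : xL ∈ Ioo (1/2:ℝ) 1 := ⟨hxLh, hxL1⟩
  -- uniqueness
  have huniq : ∀ x ∈ Ioo (1/2:ℝ) 1, qreL aY bY Ty x = c → x = xL := by
    intro x hx hx'
    apply uniq_root (f := fun w => qreL aY bY Ty w - c) (a := 1/2) (b := 1)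
      ?_ ?_ x hx xL hxLIoo (sub_eq_zero_of_eq hx') (sub_eq_zero_of_eq hxL)
    · intro z hz
      exact ⟨_, (hasDerivAt_qreL (by have := hz.1; linarith) hz.2).sub_const c⟩
    · intro z hz h0
      have h1 : qreL aY bY Ty z = c := by
        have := sub_eq_zero.1 h0
        linarith [this]
      obtain ⟨d, hd0, hdd⟩ := hDpos z hz h1
      exact ⟨d, hd0, hdd.sub_const c⟩
  -- sign of L - c left of xL
  have hsignL : ∀ z ∈ Ioo (1/2:ℝ) 1, z < xL → qreL aY bY Ty z < c := by
    intro z hz hzlt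
    by_contra hcon
    push_neg at hcon
    have hsub : Icc (1/2:ℝ) z ⊆ Ioo (0:ℝ) 1 := fun w hw =>
      ⟨by have := hw.1; linarith, lt_of_le_of_lt hw.2 hz.2⟩
    obtain ⟨r, hrmem, hr⟩ := intermediate_value_Icc (le_of_lt hz.1) (hLcont _ hsub)
      ⟨by rw [hLhalf]; exact hYhalfc.le, hcon⟩
    have hrh : (1/2:ℝ) < r := by
      rcases eq_or_lt_of_le hrmem.1 with h | h
      · rw [← h, hLhalf] at hr
        exact absurd hr (ne_of_lt hYhalfc)
      · exact h
    have hrIoo : r ∈ Ioo (1/2:ℝ) 1 := ⟨hrh, lt_of_le_of_lt hrmem.2 hz.2⟩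
    have hreq := huniq r hrIoo hr
    rw [hreq] at hrmem
    linarith [hrmem.2]
  -- sign of L - c right of xL
  have hsignR : ∀ z ∈ Ioo (1/2:ℝ) 1, xL < z → c < qreL aY bY Ty z := by
    intro z hz hzlt
    by_contra hcon
    push_neg at hcon
    obtain ⟨w, hwL, hwmem⟩ := (hEv.and (eventually_of_mem (Ioo_mem_nhdsLT_of_mem
      (⟨hz.2, le_refl (1:ℝ)⟩ : (1:ℝ) ∈ Ioc z 1)) (fun x hx => hx))).exists
    have hsub : Icc z w ⊆ Ioo (0:ℝ) 1 := fun v hv =>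
      ⟨by have h1 := hv.1; have h2 := hz.1; linarith, lt_of_le_of_lt hv.2 hwmem.2⟩
    obtain ⟨r, hrmem, hr⟩ := intermediate_value_Icc (le_of_lt hwmem.1) (hLcont _ hsub)
      ⟨hcon, hwL.le⟩
    have hrIoo : r ∈ Ioo (1/2:ℝ) 1 :=
      ⟨lt_of_lt_of_le hz.1 hrmem.1, lt_of_le_of_lt hrmem.2 hwmem.2⟩
    have hreq := huniq r hrIoo hr
    rw [hreq] at hrmem
    linarith [hrmem.1]
  -- max property
  have hmax : ∀ x ∈ Ioo (1/2:ℝ) 1, qreTX aX bX aY bY Ty x ≤ qreTX aX bX aY bY Ty xL := by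
    have hTcont : ∀ s : Set ℝ, s ⊆ Ioo (1/2:ℝ) 1 → ContinuousOn (qreTX aX bX aY bY Ty) s := by
      intro s hs w hw
      exact (hasDerivAt_qreTX (hs hw).1 (hs hw).2
        (ne_of_lt (hGneg w (hs hw)))).continuousAt.continuousWithinAt
    intro x hx
    rcases lt_trichotomy x xL with hlt | heq | hgt
    · -- increasing on [x, xL]
      have hsub : Icc x xL ⊆ Ioo (1/2:ℝ) 1 := fun w hw =>
        ⟨lt_of_lt_of_le hx.1 hw.1, lt_of_le_of_lt hw.2 hxL1⟩
      have hmono := strictMonoOn_of_deriv_pos (convex_Icc x xL) (hTcont _ hsub) ?_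
      · exact (hmono ⟨le_refl x, hlt.le⟩ ⟨hlt.le, le_refl xL⟩ hlt).le
      · intro z hz
        rw [interior_Icc] at hz
        have hzIoo : z ∈ Ioo (1/2:ℝ) 1 := hsub ⟨hz.1.le, hz.2.le⟩
        have hGz := hGneg z hzIoo
        rw [(hasDerivAt_qreTX hzIoo.1 hzIoo.2 (ne_of_lt hGz)).deriv]
        apply div_pos
        · have hLz := hsignL z hzIoo hz.2
          rw [hc_def, lt_div_iff₀ haXbX] at hLz
          linarith
        · apply mul_pos
          · have h1 := hzIoo.1; have h2 := hzIoo.2; nlinarith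
          · exact pow_two_pos_of_ne_zero (ne_of_lt hGz)
    · rw [heq]
    · -- decreasing on [xL, x]
      have hsub : Icc xL x ⊆ Ioo (1/2:ℝ) 1 := fun w hw =>
        ⟨lt_of_lt_of_le hxLh hw.1, lt_of_le_of_lt hw.2 hx.2⟩
      have hanti := strictAntiOn_of_deriv_neg (convex_Icc xL x) (hTcont _ hsub) ?_
      · exact (hanti ⟨le_refl xL, hgt.le⟩ ⟨hgt.le, le_refl x⟩ hgt).le
      · intro z hz
        rw [interior_Icc] at hz
        have hzIoo : z ∈ Ioo (1/2:ℝ) 1 := hsub ⟨hz.1.le, hz.2.le⟩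
        have hGz := hGneg z hzIoo
        rw [(hasDerivAt_qreTX hzIoo.1 hzIoo.2 (ne_of_lt hGz)).deriv]
        apply div_neg_of_neg_of_pos
        · have hLz := hsignR z hzIoo hz.1
          rw [hc_def, div_lt_iff₀ haXbX] at hLz
          linarith
        · apply mul_pos
          · have h1 := hzIoo.1; have h2 := hzIoo.2; nlinarith
          · exact pow_two_pos_of_ne_zero (ne_of_lt hGz)
  -- positivity of qreTX xL
  have hTpos : 0 < qreTX aX bX aY bY Ty xL := by
    obtain ⟨x₃, hx₃Y, hx₃mem⟩ := (hEvY.and (eventually_of_mem (Ioo_mem_nhdsLT_of_mem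
      (⟨hxL1, le_refl (1:ℝ)⟩ : (1:ℝ) ∈ Ioc xL 1)) (fun x hx => hx))).exists
    have hx₃Ioo : x₃ ∈ Ioo (1/2:ℝ) 1 := ⟨lt_trans hxLh hx₃mem.1, hx₃mem.2⟩
    have hT3 : 0 < qreTX aX bX aY bY Ty x₃ := by
      rw [qreTX]
      apply div_pos_of_neg_of_neg
      · rw [hc_def, div_lt_iff₀ haXbX] at hx₃Y
        linarith
      · exact hGneg x₃ hx₃Ioo
    exact lt_of_lt_of_le hT3 (hmax x₃ hx₃Ioo)
  exact ⟨xL, hxLIoo, hxL, huniq, hTpos, hmax⟩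
end
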